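/- Let p : E ⥤ B, F : B ⥤ B, G : E ⥤ E, with distributive law δ : F∘p ⟶ p∘G, and let s : B ⥤ E be a section of p equipped with a natural isomorphism σ : G ∘ s ≅ s ∘ F such that the composite F ≅ F∘p∘s ⟶(δ∘s) p∘G∘s ⟶(p∘σ) p∘s∘F ≅ F is the identity. Then s lifts to a functor from F-algebras to G-algebras, sending an F-algebra (A, a : F A ⟶ A) to the G-algebra (s A, s(a) ∘ σ_A : G(s A) ⟶ s A), and this lift is a section of the lifted functor p' : Alg G ⥤ Alg F induced by δ. -/

import Mathlib

open CategoryTheory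

variable {E B : Type*} [Category E] [Category B]

/-- The Beck lifting of `p : E ⥤ B` to algebra categories determined by a distributive law
`δ : F ∘ p ⟶ p ∘ G`: it sends a `G`-algebra `(X, a)` to the `F`-algebra `(p X, p a ∘ δ_X)`. -/
def beckLift (p : E ⥤ B) (F : B ⥤ B) (G : E ⥤ E) (δ : p ⋙ F ⟶ G ⋙ p) :
    Endofunctor.Algebra G ⥤ Endofunctor.Algebra F where
  obj X := ⟨p.obj X.a, δ.app X.a ≫ p.map X.str⟩
  map {X Y} f :=
    { f := p.map f.f
      h := by
        dsimp
        rw [← Category.assoc, ← Functor.comp_map p F, δ.naturality f.f,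
          Functor.comp_map, Category.assoc, ← p.map_comp, f.h, p.map_comp,
          Category.assoc] }
  map_id X := by ext; simp
  map_comp f g := by ext; simp

lemma alg_eq {F : B ⥤ B} {A C : Endofunctor.Algebra F} (h : A.a = C.a)
    (hstr : A.str = eqToHom (congrArg F.obj h) ≫ C.str ≫ eqToHom h.symm) : A = C := by
  cases A; cases C
  cases h
  simp only [eqToHom_refl, Category.comp_id, Category.id_comp] at hstr
  cases hstr
  rfl

lemma alg_eqToHom_f {F : B ⥤ B} {A C : Endofunctor.Algebra F} (h : A = C) :
    (eqToHom h : A ⟶ C).f = eqToHom (congrArg Endofunctor.Algebra.a h) := by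
  cases h; rfl

/-- let `p : E ⥤ B` carry a distributive law `δ : F ∘ p ⟶ p ∘ G`, and let
`s : B ⥤ E` be a section of `p` with a natural isomorphism `σ : G ∘ s ≅ s ∘ F` such that the
composite `F ≅ F ∘ p ∘ s ⟶ p ∘ G ∘ s ⟶ p ∘ s ∘ F ≅ F` is the identity.  Then `s` lifts to a
functor from `F`-algebras to `G`-algebras, sending `(A, a)` to `(s A, s a ∘ σ_A)`, and this
lift is a section of the Beck lifting `p' : Alg G ⥤ Alg F` induced by `δ`. -/
theorem section_lifts_to_algebras
    (p : E ⥤ B) (F : B ⥤ B) (G : E ⥤ E) (δ : p ⋙ F ⟶ G ⋙ p)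
    (s : B ⥤ E) (hs : s ⋙ p = 𝟭 B) (σ : s ⋙ G ≅ F ⋙ s)
    (hσ : ∀ A : B,
      eqToHom (congrArg F.obj (Functor.congr_obj hs A)).symm ≫
          δ.app (s.obj A) ≫ p.map (σ.hom.app A) ≫
            eqToHom (Functor.congr_obj hs (F.obj A)) = 𝟙 (F.obj A)) :
    ∃ s' : Endofunctor.Algebra F ⥤ Endofunctor.Algebra G,
      (∀ X : Endofunctor.Algebra F,
        s'.obj X = ⟨s.obj X.a, σ.hom.app X.a ≫ s.map X.str⟩) ∧
      s' ⋙ beckLift p F G δ = 𝟭 (Endofunctor.Algebra F) := by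
  refine ⟨{
    obj := fun X => ⟨s.obj X.a, σ.hom.app X.a ≫ s.map X.str⟩
    map := fun {X Y} f => {
      f := s.map f.f
      h := by
        dsimp
        rw [← Category.assoc, ← Functor.comp_map s G, σ.hom.naturality f.f,
          Functor.comp_map, Category.assoc, ← s.map_comp, f.h, s.map_comp,
          Category.assoc]
    }
    map_id := fun X => by ext; simp
    map_comp := fun f g => by ext; simp
  }, fun X => rfl, ?_⟩
  fapply CategoryTheory.Functor.ext
  · intro X
    apply alg_eq (Functor.congr_obj hs X.a)
    dsimp [beckLift]
    rw [p.map_comp]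
    have h1 := hσ X.a
    have h2 := Functor.congr_hom hs X.str
    simp only [Functor.comp_map, Functor.id_map] at h2
    rw [h2]
    have key : δ.app (s.obj X.a) ≫ p.map (σ.hom.app X.a) ≫
        eqToHom (Functor.congr_obj hs (F.obj X.a)) =
        eqToHom (congrArg F.obj (Functor.congr_obj hs X.a)) := by
      have h1' := congrArg
        (fun t => eqToHom (congrArg F.obj (Functor.congr_obj hs X.a)) ≫ t) h1
      simpa using h1'
    calc δ.app (s.obj X.a) ≫ p.map (σ.hom.app X.a) ≫
          eqToHom (Functor.congr_obj hs (F.obj X.a)) ≫ X.str ≫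
          eqToHom (Functor.congr_obj hs X.a).symm
        = (δ.app (s.obj X.a) ≫ p.map (σ.hom.app X.a) ≫
            eqToHom (Functor.congr_obj hs (F.obj X.a))) ≫ X.str ≫
            eqToHom (Functor.congr_obj hs X.a).symm := by simp
      _ = _ := by rw [key]
  · intro X Y f
    ext
    dsimp [beckLift]
    have h2 := Functor.congr_hom hs f.f
    simp only [Functor.comp_map, Functor.id_map] at h2
    refine h2.trans ?_
    have hf : ∀ {A C : Endofunctor.Algebra F} (h : A = C) (h' : A.a = C.a),
        (eqToHom h).f = eqToHom h' := by
      intro A C h h'; cases h; rfl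
    congr 1
    · symm
      apply hf
    · congr 1
      symm
      apply hf
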